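/- arXiv:2411.05238 — 4 statements merged into one kernel-verified Lean document; each statement's English description precedes it below -/
import Mathlib

section
/- Let V be a vector space over ℝ and let a, b ∈ V be linearly independent. Then for any x ∈ V, x lies in the span of {a, b} if and only if the outer product of x with the 2-blade a∧b vanishes in the exterior algebra: x ∈ span{a, b} ↔ ι(x) * ι(a) * ι(b) = 0 in ExteriorAlgebra ℝ V. (A homogeneous subspace is characterized by the vanishing of the outer product with its representing blade.) -/
/-- A homogeneous subspace is characterized by the vanishing of the outer product with
its representing blade: for linearly independent `a, b`, a vector `x` lies in
`span {a, b}` iff `x ∧ a ∧ b = 0` in the exterior algebra. -/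
theorem mem_span_iff_wedge_eq_zero {V : Type*} [AddCommGroup V] [Module ℝ V]
    (a b : V) (h : LinearIndependent ℝ ![a, b]) (x : V) :
    x ∈ Submodule.span ℝ ({a, b} : Set V) ↔
      ExteriorAlgebra.ι ℝ x * ExteriorAlgebra.ι ℝ a * ExteriorAlgebra.ι ℝ b = 0 := by
  constructor
  · rw [Submodule.mem_span_pair]
    rintro ⟨c, d, rfl⟩
    have ha := ExteriorAlgebra.ι_sq_zero (R := ℝ) a
    have hb := ExteriorAlgebra.ι_sq_zero (R := ℝ) b
    have hab := ExteriorAlgebra.ι_add_mul_swap (R := ℝ) a b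
    simp only [map_add, map_smul]
    rw [add_mul, add_mul, smul_mul_assoc, smul_mul_assoc, smul_mul_assoc, smul_mul_assoc,
      ha, zero_mul, smul_zero]
    have : ExteriorAlgebra.ι ℝ b * ExteriorAlgebra.ι ℝ a =
        - (ExteriorAlgebra.ι ℝ a * ExteriorAlgebra.ι ℝ b) :=
      eq_neg_of_add_eq_zero_right hab
    rw [this, neg_mul, mul_assoc, hb, mul_zero, neg_zero, smul_zero, add_zero]
  · intro hw
    by_contra hx
    -- x, a, b are linearly independent
    have hli : LinearIndependent ℝ ![x, a, b] := by
      rw [show (![x, a, b] : Fin 3 → V) = Fin.cons x ![a, b] from rfl,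
        linearIndependent_fin_cons]
      refine ⟨h, ?_⟩
      rwa [show Set.range ![a, b] = {a, b} by
        simp [Matrix.range_cons, Matrix.range_empty, Set.pair_comm]]
    have hinj : Function.Injective ![x, a, b] := hli.injective
    have hxa : x ≠ a := fun e => by
      have := hinj (a₁ := 0) (a₂ := 1) (by simpa using e); simp at this
    have hxb : x ≠ b := fun e => by
      have := hinj (a₁ := 0) (a₂ := 2) (by simpa using e); simp at this
    have hab : a ≠ b := fun e => by
      have := hinj (a₁ := 1) (a₂ := 2) (by simpa using e); simp at this
    have hset : LinearIndepOn ℝ id (Set.range ![x, a, b]) :=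
      (linearIndepOn_id_range_iff hli.injective).mpr hli
    let B := Module.Basis.extend hset
    have hsub : Set.range ![x, a, b] ⊆ hset.extend (Set.subset_univ _) :=
      hset.subset_extend _
    have hxmem : x ∈ hset.extend (Set.subset_univ _) := hsub ⟨0, rfl⟩
    have hamem : a ∈ hset.extend (Set.subset_univ _) := hsub ⟨1, rfl⟩
    have hbmem : b ∈ hset.extend (Set.subset_univ _) := hsub ⟨2, rfl⟩
    set ix : hset.extend (Set.subset_univ _) := ⟨x, hxmem⟩
    set ia : hset.extend (Set.subset_univ _) := ⟨a, hamem⟩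
    set ib : hset.extend (Set.subset_univ _) := ⟨b, hbmem⟩
    let idx : Fin 3 → hset.extend (Set.subset_univ _) := ![ix, ia, ib]
    let g : V →ₗ[ℝ] (Fin 3 → ℝ) := LinearMap.pi fun k => B.coord (idx k)
    let f : V [⋀^Fin 3]→ₗ[ℝ] ℝ := Matrix.detRowAlternating.compLinearMap g
    have hBx : B ix = x := Module.Basis.extend_apply_self hset ix
    have hBa : B ia = a := Module.Basis.extend_apply_self hset ia
    have hBb : B ib = b := Module.Basis.extend_apply_self hset ib
    have hc1 : ∀ i : hset.extend (Set.subset_univ _), B.coord i (B i) = 1 := by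
      intro i; simp [Module.Basis.coord_apply]
    have hc0 : ∀ i j : hset.extend (Set.subset_univ _), j ≠ i → B.coord i (B j) = 0 := by
      intro i j hij
      rw [Module.Basis.coord_apply, Module.Basis.repr_self, Finsupp.single_eq_of_ne' hij]
    have hne1 : ia ≠ ix := fun e => hxa (congrArg Subtype.val e).symm
    have hne2 : ib ≠ ix := fun e => hxb (congrArg Subtype.val e).symm
    have hne3 : ib ≠ ia := fun e => hab (congrArg Subtype.val e).symm
    have hne1' : ix ≠ ia := hne1.symm
    have hne2' : ix ≠ ib := hne2.symm
    have hne3' : ia ≠ ib := hne3.symm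
    have e1 : B.coord ix x = 1 := by have := hc1 ix; rwa [hBx] at this
    have e2 : B.coord ia a = 1 := by have := hc1 ia; rwa [hBa] at this
    have e3 : B.coord ib b = 1 := by have := hc1 ib; rwa [hBb] at this
    have e4 : B.coord ia x = 0 := by have := hc0 ia ix hne1'; rwa [hBx] at this
    have e5 : B.coord ib x = 0 := by have := hc0 ib ix hne2'; rwa [hBx] at this
    have e6 : B.coord ix a = 0 := by have := hc0 ix ia hne1; rwa [hBa] at this
    have e7 : B.coord ib a = 0 := by have := hc0 ib ia hne3'; rwa [hBa] at this
    have e8 : B.coord ix b = 0 := by have := hc0 ix ib hne2; rwa [hBb] at this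
    have e9 : B.coord ia b = 0 := by have := hc0 ia ib hne3; rwa [hBb] at this
    have hfval : f ![x, a, b] = 1 := by
      have hmat : (fun k => g (![x, a, b] k)) = (1 : Matrix (Fin 3) (Fin 3) ℝ) := by
        funext k l
        fin_cases k <;> fin_cases l <;>
          simp [g, idx, Matrix.one_apply, e1, e2, e3, e4, e5, e6, e7, e8, e9]
      show Matrix.detRowAlternating (fun k => g (![x, a, b] k)) = 1
      rw [hmat]
      exact Matrix.det_one
    have hmulti : ExteriorAlgebra.ιMulti ℝ 3 ![x, a, b] =
        ExteriorAlgebra.ι ℝ x * ExteriorAlgebra.ι ℝ a * ExteriorAlgebra.ι ℝ b := by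
      rw [ExteriorAlgebra.ιMulti_apply]
      simp [List.ofFn_succ, mul_assoc]
    let fam : ∀ i, V [⋀^Fin i]→ₗ[ℝ] ℝ := fun i =>
      match i with
      | 3 => f
      | _ => 0
    have hl := ExteriorAlgebra.liftAlternating_apply_ιMulti
      (R := ℝ) (M := V) (N := ℝ) (n := 3) fam ![x, a, b]
    rw [hmulti, hw, map_zero] at hl
    have : (0 : ℝ) = 1 := by rw [hl]; exact hfval
    exact one_ne_zero this.symm
end

section
/- In the projective geometric algebra Cl(3,0,1), reflecting a plane in a plane is realized by the vector sandwich product: for p = ι(δ, n) with ‖n‖ = 1 representing the mirror plane and m = ι(δ', n') representing an arbitrary plane, one has −ι(δ, n) * ι(δ', n') * ι(δ, n) = ι(δ' − 2⟪n,n'⟫δ, n' − 2⟪n,n'⟫•n); i.e., the result is again a vector, representing the reflected plane (its normal is the Euclidean reflection of n' across n, and its offset is transformed accordingly). -/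
open scoped RealInnerProductSpace

/-- The degenerate quadratic form `Q₀(δ, n) = ‖n‖²` on `ℝ × ℝ³` defining the
projective geometric algebra `Cl(3,0,1)`; the null vector `e₀ = (1, 0)` satisfies
`Q₀ e₀ = 0`. -/
noncomputable def Qpga : QuadraticForm ℝ (ℝ × EuclideanSpace ℝ (Fin 3)) :=
  (LinearMap.BilinMap.toQuadraticMap (innerₗ (EuclideanSpace ℝ (Fin 3)))).comp
    (LinearMap.snd ℝ ℝ (EuclideanSpace ℝ (Fin 3)))

/-- In PGA, reflecting the plane `ι(δ', n')` in the unit plane `ι(δ, n)` via the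
sandwich product yields again a vector, representing the reflected plane. -/
theorem pga_plane_reflection (δ δ' : ℝ) (n n' : EuclideanSpace ℝ (Fin 3)) (hn : ‖n‖ = 1) :
    -(CliffordAlgebra.ι Qpga (δ, n) * CliffordAlgebra.ι Qpga (δ', n') *
        CliffordAlgebra.ι Qpga (δ, n))
      = CliffordAlgebra.ι Qpga (δ' - 2 * ⟪n, n'⟫ * δ, n' - (2 * ⟪n, n'⟫) • n) := by
  have hQ' : ∀ v : ℝ × EuclideanSpace ℝ (Fin 3), Qpga v = ⟪v.2, v.2⟫ := fun v => by
    simp only [Qpga, QuadraticMap.comp_apply, LinearMap.snd_apply,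
      LinearMap.BilinMap.toQuadraticMap_apply, innerₗ_apply_apply]
  have hQ : Qpga (δ, n) = 1 := by
    rw [hQ', real_inner_self_eq_norm_sq, hn]; norm_num
  have hpol : QuadraticMap.polar Qpga (δ', n') (δ, n) = 2 * ⟪n, n'⟫ := by
    simp only [QuadraticMap.polar, hQ', Prod.snd_add, inner_add_add_self]
    rw [real_inner_comm n' n]; ring
  have key : (δ' - 2 * ⟪n, n'⟫ * δ, n' - (2 * ⟪n, n'⟫) • n)
      = (δ', n') - (2 * ⟪n, n'⟫) • (δ, n) := by
    simp [Prod.ext_iff]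
  rw [key, map_sub, map_smul, mul_assoc, CliffordAlgebra.ι_mul_ι_comm, mul_sub,
    ← mul_assoc, CliffordAlgebra.ι_sq_scalar, hQ, hpol, map_one, one_mul,
    ← Algebra.commutes, ← Algebra.smul_def, neg_sub]
end

section
/- In the projective geometric algebra Cl(3,0,1), the translator obtained from two parallel unit planes acts on planes by translation: for any unit vector n ∈ ℝ³ and δ ∈ ℝ, set T = ι(δ, n) * ι(0, n); then for every plane vector m = ι(δ', n'), T * ι(δ', n') * reverse(T) = ι(δ' + 2δ⟪n,n'⟫, n'). That is, the sandwich by T leaves the plane's normal n' unchanged and shifts its offset by 2δ⟪n,n'⟫, which is exactly the effect of translating the plane by the vector −2δ•n. -/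
open scoped RealInnerProductSpace

lemma Qpga_apply (a : ℝ) (u : EuclideanSpace ℝ (Fin 3)) : Qpga (a, u) = ⟪u, u⟫ := rfl

lemma Qpga_polar (a b : ℝ) (u v : EuclideanSpace ℝ (Fin 3)) :
    QuadraticMap.polar Qpga (a, u) (b, v) = 2 * ⟪u, v⟫ := by
  simp only [QuadraticMap.polar, Prod.mk_add_mk, Qpga_apply, inner_add_left, inner_add_right,
    real_inner_comm u v]
  ring

/-- The translator `T = ι(δ, n) * ι(0, n)` acts on planes by translation: it leaves
the normal `n'` unchanged and shifts the offset by `2δ⟪n,n'⟫`. -/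
theorem pga_translator_action (δ : ℝ) (n : EuclideanSpace ℝ (Fin 3)) (hn : ‖n‖ = 1)
    (δ' : ℝ) (n' : EuclideanSpace ℝ (Fin 3)) :
    (CliffordAlgebra.ι Qpga (δ, n) * CliffordAlgebra.ι Qpga (0, n)) *
        CliffordAlgebra.ι Qpga (δ', n') *
        CliffordAlgebra.reverse
          (CliffordAlgebra.ι Qpga (δ, n) * CliffordAlgebra.ι Qpga (0, n))
      = CliffordAlgebra.ι Qpga (δ' + 2 * δ * ⟪n, n'⟫, n') := by
  set ι := CliffordAlgebra.ι Qpga with hι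
  set A := ι (δ, n) with hA
  set B := ι (0, n) with hB
  set M := ι (δ', n') with hM
  have hnn : ⟪n, n⟫ = (1 : ℝ) := by
    rw [real_inner_self_eq_norm_sq, hn]; norm_num
  have hA2 : A * A = 1 := by
    rw [hA, hι, CliffordAlgebra.ι_sq_scalar, Qpga_apply, hnn, map_one]
  have hB2 : B * B = 1 := by
    rw [hB, hι, CliffordAlgebra.ι_sq_scalar, Qpga_apply, hnn, map_one]
  set c : ℝ := 2 * ⟪n, n'⟫ with hc
  have hAB : A * B + B * A = algebraMap ℝ _ 2 := by
    rw [hA, hB, hι, CliffordAlgebra.ι_mul_ι_add_swap, Qpga_polar, hnn]; norm_num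
  have hAM : A * M + M * A = algebraMap ℝ _ c := by
    rw [hA, hM, hι, CliffordAlgebra.ι_mul_ι_add_swap, Qpga_polar]
  have hBM : B * M + M * B = algebraMap ℝ _ c := by
    rw [hB, hM, hι, CliffordAlgebra.ι_mul_ι_add_swap, Qpga_polar]
  have hrev : CliffordAlgebra.reverse (A * B) = B * A := by
    rw [CliffordAlgebra.reverse.map_mul, hA, hB, hι, CliffordAlgebra.reverse_ι,
      CliffordAlgebra.reverse_ι]
  rw [hrev]
  have hBMB : B * M * B = algebraMap ℝ _ c * B - M := by
    have : B * M = algebraMap ℝ _ c - M * B := eq_sub_of_add_eq hBM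
    rw [this, sub_mul, mul_assoc, hB2, mul_one]
  have hABA : A * B * A = algebraMap ℝ _ 2 * A - B := by
    have : A * B = algebraMap ℝ _ 2 - B * A := eq_sub_of_add_eq hAB
    rw [this, sub_mul, mul_assoc, hA2, mul_one]
  have hAMA : A * M * A = algebraMap ℝ _ c * A - M := by
    have : A * M = algebraMap ℝ _ c - M * A := eq_sub_of_add_eq hAM
    rw [this, sub_mul, mul_assoc, hA2, mul_one]
  have key : A * B * M * (B * A) = algebraMap ℝ _ c * A - algebraMap ℝ _ c * B + M := by
    have h1 : A * B * M * (B * A) = A * (B * M * B) * A := by noncomm_ring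
    have h2 : A * (algebraMap ℝ _ c * B) = algebraMap ℝ _ c * (A * B) := by
      rw [← mul_assoc, ← Algebra.commutes c A, mul_assoc]
    rw [h1, hBMB, mul_sub, sub_mul, hAMA, h2, mul_assoc _ (A * B) A, hABA]
    rw [mul_sub, ← mul_assoc, ← map_mul, show c * 2 = c + c by ring, map_add]
    noncomm_ring
  rw [key]
  have : (δ' + 2 * δ * ⟪n, n'⟫, n') = c • (δ, n) - c • ((0:ℝ), n) + (δ', n') := by
    simp [hc, Prod.ext_iff]; ring
  rw [hM, hA, hB, hι, this, map_add, map_sub, map_smul, map_smul]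
  simp [Algebra.smul_def]
end

section
/- (Cartan–Dieudonné) Let E be a finite-dimensional real inner product space of dimension d. Then every linear isometry equivalence f : E ≃ E (orthogonal transformation) can be written as a composition of at most d hyperplane reflections: there exists a list of nonzero vectors v₁, …, v_k ∈ E with k ≤ d such that f = r_{v₁} ∘ r_{v₂} ∘ ⋯ ∘ r_{v_k}, where r_v denotes the reflection across the hyperplane orthogonal to v (with r of the empty list being the identity). -/
open scoped RealInnerProductSpace

/-- Euclidean reflection across the hyperplane orthogonal to a (nonzero) vector `v`. -/
noncomputable def reflVec {E : Type*} [NormedAddCommGroup E] [InnerProductSpace ℝ E]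
    (v x : E) : E :=
  x - (2 * (⟪x, v⟫ / ⟪v, v⟫)) • v

lemma reflVec_eq_reflection {E : Type*} [NormedAddCommGroup E] [InnerProductSpace ℝ E]
    (v : E) : reflVec v = ⇑(Submodule.reflection (ℝ ∙ v)ᗮ) := by
  funext x
  rw [reflVec, Submodule.reflection_orthogonal_apply, Submodule.reflection_singleton_apply]
  rw [real_inner_comm x v, real_inner_self_eq_norm_sq]
  rw [two_smul, mul_smul, two_smul]
  abel

lemma cartan_dieudonne_aux {E : Type*} [NormedAddCommGroup E] [InnerProductSpace ℝ E]
    (t : List E) :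
    ∃ l : List E, l.length ≤ t.length ∧ (∀ v ∈ l, v ≠ 0) ∧
      ⇑(List.map (fun v => Submodule.reflection (ℝ ∙ v)ᗮ) t).prod =
        List.foldr (fun v g => reflVec v ∘ g) id l := by
  induction t with
  | nil => exact ⟨[], by simp, by simp, by simp⟩
  | cons v t ih =>
    obtain ⟨l', h1, h2, h3⟩ := ih
    by_cases hv : v = 0
    · refine ⟨l', h1.trans (by simp), h2, ?_⟩
      rw [← h3]
      subst hv
      have hid : ∀ x : E, Submodule.reflection (⊤ : Submodule ℝ E) x = x := fun x =>
        (Submodule.reflection_eq_self_iff x).2 trivial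
      simp only [List.map_cons, List.prod_cons]
      funext x
      simp [hid]
    · refine ⟨v :: l', by simpa using h1, ?_, ?_⟩
      · intro w hw
        rcases List.mem_cons.mp hw with rfl | hw
        · exact hv
        · exact h2 w hw
      · simp only [List.foldr_cons, ← h3, List.map_cons, List.prod_cons]
        funext x
        simp [reflVec_eq_reflection]

/-- **Cartan–Dieudonné**: every orthogonal transformation of a `d`-dimensional real
inner product space is a composition of at most `d` hyperplane reflections. -/
theorem cartan_dieudonne {E : Type*} [NormedAddCommGroup E] [InnerProductSpace ℝ E]
    [FiniteDimensional ℝ E] (f : E ≃ₗᵢ[ℝ] E) :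
    ∃ l : List E, l.length ≤ Module.finrank ℝ E ∧ (∀ v ∈ l, v ≠ 0) ∧
      ⇑f = l.foldr (fun v g => reflVec v ∘ g) id := by
  obtain ⟨t, ht, hf⟩ := f.reflections_generate_dim
  obtain ⟨l, h1, h2, h3⟩ := cartan_dieudonne_aux t
  exact ⟨l, h1.trans ht, h2, by rw [hf, h3]⟩
end
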